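/- Let X be an n×p full-rank matrix and k > m(X). Then for every f ∈ ℝᵖ and every α > 0 there exists e ∈ ℝⁿ with ‖e‖₀ ≤ k and a vector g_k ∈ ℝᵖ with ‖g_k‖₂ = 1 such that ‖(Xf + e) - X(f + α g_k)‖₁ ≤ ‖(Xf + e) - Xf‖₁; i.e., f is not the unique minimizer of g ↦ ‖Xf + e - Xg‖₁. -/

import Mathlib

open Finset Matrix

noncomputable def l1 {n : ℕ} (v : Fin n → ℝ) : ℝ := ∑ i, |v i|

noncomputable def l1On {n : ℕ} (M : Finset (Fin n)) (v : Fin n → ℝ) : ℝ := ∑ i ∈ M, |v i|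

noncomputable def linfOn {n : ℕ} (M : Finset (Fin n)) (v : Fin n → ℝ) : ℝ :=
  sSup ((fun i => |v i|) '' (M : Set (Fin n)))

open scoped Classical in
noncomputable def l0 {n : ℕ} (v : Fin n → ℝ) : ℕ :=
  (Finset.univ.filter (fun i => v i ≠ 0)).card

/-- The leverage constants `c_k(X)`. -/
noncomputable def cK {n p : ℕ} (X : Matrix (Fin n) (Fin p) ℝ) (k : ℕ) : ℝ :=
  sInf {r | ∃ M : Finset (Fin n), M.card = k ∧ ∃ g : Fin p → ℝ, g ≠ 0 ∧
    r = (∑ i ∈ Mᶜ, |X.mulVec g i|) / (∑ i, |X.mulVec g i|)}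

/-- `m(X) = max {k ∈ {0,…,n} : c_k(X) > 1/2}`. -/
noncomputable def mX {n p : ℕ} (X : Matrix (Fin n) (Fin p) ℝ) : ℕ :=
  sSup {k | k ≤ n ∧ cK X k > 1/2}

noncomputable def psi {n p : ℕ} (X : Matrix (Fin n) (Fin p) ℝ) (σ : ℝ) (y : Fin n → ℝ)
    (g : Fin p → ℝ) (b : Fin n → ℝ) : ℝ :=
  σ * l1 (y - X.mulVec g - b) + (1/2) * ∑ i, b i ^ 2

noncomputable def softThresh (t ξ : ℝ) : ℝ :=
  if t < ξ then ξ - t else if ξ < -t then ξ + t else 0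


lemma mulVec_injective_of_rank' {n p : ℕ} (X : Matrix (Fin n) (Fin p) ℝ) (hX : X.rank = p) :
    Function.Injective X.mulVec := by
  have h1 : Module.finrank ℝ (LinearMap.range X.mulVecLin) = p := hX
  have h2 := LinearMap.finrank_range_add_finrank_ker X.mulVecLin
  rw [h1, Module.finrank_pi, Fintype.card_fin] at h2
  have hker : LinearMap.ker X.mulVecLin = ⊥ := Submodule.finrank_eq_zero.mp (by omega)
  have h := LinearMap.ker_eq_bot.mp hker
  exact h

lemma ratio_smul' {n p : ℕ} (X : Matrix (Fin n) (Fin p) ℝ) (M : Finset (Fin n))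
    (g : Fin p → ℝ) (c : ℝ) (hc : c ≠ 0) :
    (∑ i ∈ Mᶜ, |X.mulVec (c • g) i|) / (∑ i, |X.mulVec (c • g) i|)
      = (∑ i ∈ Mᶜ, |X.mulVec g i|) / (∑ i, |X.mulVec g i|) := by
  have h : ∀ i, |X.mulVec (c • g) i| = |c| * |X.mulVec g i| := by
    intro i; rw [Matrix.mulVec_smul]; simp [abs_mul]
  simp_rw [h, ← Finset.mul_sum]
  exact mul_div_mul_left _ _ (abs_ne_zero.mpr hc)

theorem l1_no_recovery_above_breakdown {n p : ℕ} (X : Matrix (Fin n) (Fin p) ℝ)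
    (hp : 0 < p) (hpn : p < n) (hX : X.rank = p)
    (k : ℕ) (hk : mX X < k) (hkn : k ≤ n) (f : Fin p → ℝ) (α : ℝ) (hα : 0 < α) :
    ∃ (e : Fin n → ℝ) (gk : Fin p → ℝ), l0 e ≤ k ∧ Real.sqrt (∑ j, gk j ^ 2) = 1 ∧
      l1 (X.mulVec f + e - X.mulVec (f + α • gk)) ≤ l1 (X.mulVec f + e - X.mulVec f) := by
  classical
  have hinj : Function.Injective X.mulVec := mulVec_injective_of_rank' X hX
  have hck : cK X k ≤ 1/2 := by
    by_contra h
    push_neg at h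
    have hmem : k ∈ {k | k ≤ n ∧ cK X k > 1/2} := ⟨hkn, h⟩
    have hb : BddAbove {k | k ≤ n ∧ cK X k > 1/2} := ⟨n, fun x hx => hx.1⟩
    exact absurd (le_csSup hb hmem) (not_le.mpr hk)
  set S : Set ℝ := {r | ∃ M : Finset (Fin n), M.card = k ∧ ∃ g : Fin p → ℝ, g ≠ 0 ∧
    r = (∑ i ∈ Mᶜ, |X.mulVec g i|) / (∑ i, |X.mulVec g i|)} with hSdef
  have hden : ∀ g : Fin p → ℝ, g ≠ 0 → 0 < ∑ i, |X.mulVec g i| := by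
    intro g hg
    have hXg : X.mulVec g ≠ 0 := by
      intro h0
      exact hg (hinj (h0.trans (Matrix.mulVec_zero X).symm))
    rcases Function.ne_iff.mp hXg with ⟨i, hi⟩
    have h1 : 0 < |X.mulVec g i| := abs_pos.mpr hi
    exact lt_of_lt_of_le h1 (Finset.single_le_sum (f := fun j => |X.mulVec g j|) (fun j _ => abs_nonneg _) (mem_univ i))
  have hSeq : S = ⋃ M ∈ {M : Finset (Fin n) | M.card = k},
      (fun g => (∑ i ∈ Mᶜ, |X.mulVec g i|) / (∑ i, |X.mulVec g i|)) ''
        (Metric.sphere (0 : Fin p → ℝ) 1) := by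
    ext r
    simp only [Set.mem_iUnion, Set.mem_image, Set.mem_setOf_eq, hSdef]
    constructor
    · rintro ⟨M, hM, g, hg, rfl⟩
      refine ⟨M, hM, ‖g‖⁻¹ • g, ?_, ?_⟩
      · rw [mem_sphere_zero_iff_norm, norm_smul, norm_inv, norm_norm]
        exact inv_mul_cancel₀ (norm_ne_zero_iff.mpr hg)
      · exact ratio_smul' X M g _ (inv_ne_zero (norm_ne_zero_iff.mpr hg))
    · rintro ⟨M, hM, g, hgs, rfl⟩
      have hg : g ≠ 0 := by
        intro h0; rw [mem_sphere_zero_iff_norm, h0, norm_zero] at hgs; norm_num at hgs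
      exact ⟨M, hM, g, hg, rfl⟩
  have hcontmv : Continuous fun g : Fin p → ℝ => X.mulVec g := by
    have h := LinearMap.continuous_of_finiteDimensional (𝕜 := ℝ) X.mulVecLin
    exact h
  have hcs : ∀ (T : Finset (Fin n)), Continuous fun g : Fin p → ℝ => ∑ i ∈ T, |X.mulVec g i| := by
    intro T
    exact continuous_finset_sum _ fun i _ =>
      continuous_abs.comp ((continuous_apply i).comp hcontmv)
  have hcomp : IsCompact S := by
    rw [hSeq]
    apply Set.Finite.isCompact_biUnion (Set.toFinite _)
    intro M _
    apply (isCompact_sphere (0 : Fin p → ℝ) 1).image_of_continuousOn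
    apply ContinuousOn.div (hcs Mᶜ).continuousOn (hcs univ).continuousOn
    intro g hgs
    have hg : g ≠ 0 := by
      intro h0; rw [mem_sphere_zero_iff_norm, h0, norm_zero] at hgs; norm_num at hgs
    exact ne_of_gt (hden g hg)
  have hSne : S.Nonempty := by
    obtain ⟨M, -, hMcard⟩ := Finset.exists_subset_card_eq (s := (univ : Finset (Fin n))) (n := k)
      (by simpa using hkn)
    have hg : (fun _ => (1:ℝ) : Fin p → ℝ) ≠ 0 := by
      intro h0
      have := congrFun h0 ⟨0, hp⟩
      norm_num at this
    exact ⟨_, M, hMcard, _, hg, rfl⟩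
  have hmem : sInf S ∈ S := hcomp.sInf_mem hSne
  have hsinf : sInf S ≤ 1/2 := hck
  obtain ⟨M, hMcard, g, hg, hr⟩ := hmem
  have hdpos := hden g hg
  have hsplit : (∑ i ∈ M, |X.mulVec g i|) + (∑ i ∈ Mᶜ, |X.mulVec g i|)
      = ∑ i, |X.mulVec g i| := Finset.sum_add_sum_compl M _
  have hkey : (∑ i ∈ Mᶜ, |X.mulVec g i|) ≤ ∑ i ∈ M, |X.mulVec g i| := by
    rw [hr, div_le_iff₀ hdpos] at hsinf
    linarith
  -- construct gk and e
  have hTpos : 0 < ∑ j, g j ^ 2 := by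
    rcases Function.ne_iff.mp hg with ⟨j, hj⟩
    exact Finset.sum_pos' (fun i _ => sq_nonneg _)
      ⟨j, mem_univ j, (sq_nonneg _).lt_of_ne (Ne.symm (pow_ne_zero 2 hj))⟩
  set s : ℝ := Real.sqrt (∑ j, g j ^ 2) with hs
  have hspos : 0 < s := Real.sqrt_pos.mpr hTpos
  set gk : Fin p → ℝ := s⁻¹ • g with hgkdef
  set e : Fin n → ℝ := fun i => if i ∈ M then α * X.mulVec gk i else 0 with he
  have hXgk : ∀ i, |X.mulVec gk i| = s⁻¹ * |X.mulVec g i| := by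
    intro i
    rw [hgkdef, Matrix.mulVec_smul]
    simp [abs_mul, abs_of_pos (inv_pos.mpr hspos)]
  refine ⟨e, gk, ?_, ?_, ?_⟩
  · -- l0 e ≤ k
    rw [l0, ← hMcard]
    apply Finset.card_le_card
    intro i hi
    simp only [mem_filter] at hi
    by_contra hiM
    exact hi.2 (by simp [he, hiM])
  · -- unit norm
    have h1 : ∑ j, gk j ^ 2 = 1 := by
      have : ∑ j, gk j ^ 2 = s⁻¹ ^ 2 * ∑ j, g j ^ 2 := by
        rw [Finset.mul_sum]
        exact Finset.sum_congr rfl fun j _ => by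
          simp [hgkdef, mul_pow]
      rw [this, hs, inv_pow, Real.sq_sqrt hTpos.le,
        inv_mul_cancel₀ (ne_of_gt hTpos)]
    rw [h1, Real.sqrt_one]
  · -- the inequality
    have hformL : (X.mulVec f + e - X.mulVec (f + α • gk))
        = fun i => e i - α * X.mulVec gk i := by
      funext i
      simp [Matrix.mulVec_add, Matrix.mulVec_smul]
    have hformR : (X.mulVec f + e - X.mulVec f) = e := by
      funext i; simp
    rw [hformL, hformR, l1, l1]
    have hL : ∑ i, |e i - α * X.mulVec gk i|
        = ∑ i ∈ Mᶜ, α * (s⁻¹ * |X.mulVec g i|) := by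
      rw [← Finset.sum_add_sum_compl M]
      have h1 : ∑ i ∈ M, |e i - α * X.mulVec gk i| = 0 := by
        apply Finset.sum_eq_zero
        intro i hi
        simp [he, hi]
      have h2 : ∑ i ∈ Mᶜ, |e i - α * X.mulVec gk i|
          = ∑ i ∈ Mᶜ, α * (s⁻¹ * |X.mulVec g i|) := by
        apply Finset.sum_congr rfl
        intro i hi
        have hiM : i ∉ M := by simpa using hi
        rw [← hXgk i]
        simp [he, hiM, abs_mul, abs_of_pos hα]
      rw [h1, h2, zero_add]
    have hR : ∑ i, |e i| = ∑ i ∈ M, α * (s⁻¹ * |X.mulVec g i|) := by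
      rw [← Finset.sum_add_sum_compl M]
      have h1 : ∑ i ∈ M, |e i| = ∑ i ∈ M, α * (s⁻¹ * |X.mulVec g i|) := by
        apply Finset.sum_congr rfl
        intro i hi
        rw [← hXgk i]
        simp [he, hi, abs_mul, abs_of_pos hα]
      have h2 : ∑ i ∈ Mᶜ, |e i| = 0 := by
        apply Finset.sum_eq_zero
        intro i hi
        have hiM : i ∉ M := by simpa using hi
        simp [he, hiM]
      rw [h1, h2, add_zero]
    rw [hL, hR, ← Finset.mul_sum, ← Finset.mul_sum, ← Finset.mul_sum, ← Finset.mul_sum]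
    gcongr
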